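/- Let {ε^i}_{i=1}^{2l} be the dual of a symplectic basis of (V,ω) and write ω = ε^1∧ε^{l+1} + … + ε^l∧ε^{2l} ∈ ⋀^2 V*. For 0 ≤ j ≤ l and 0 ≤ i ≤ 2l with i + j ≤ 2l and i − j even and ≥ 0, the vector v = ω^{∧((i−j)/2)} ∧ ε^{l+1} ∧ … ∧ ε^{l+j} ∈ ⋀^i V* is nonzero. More precisely, when written in the standard basis of ⋀^i V*, the coefficient of the basis monomial ε^{j+1}∧…∧ε^{j+(i−j)/2} ∧ ε^{l+1}∧…∧ε^{l+j} ∧ ε^{l+j+1}∧…∧ε^{l+j+(i−j)/2} is nonzero. -/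

import Mathlib

open ExteriorAlgebra

noncomputable section

/-- Exterior forms on `V = ℝ^(2l)`. -/
abbrev FormsR (l : ℕ) := ExteriorAlgebra ℝ (Fin (2 * l) → ℝ)

/-- The dual basis vector `ε^k` (0-based index `k : ℕ`; zero if out of range). -/
def epsN (l : ℕ) (k : ℕ) : FormsR l :=
  ι ℝ (fun t => if (t : ℕ) = k then 1 else 0)

/-- The basis vector `e_k` of `V` (0-based index). -/
def eN (l : ℕ) (k : ℕ) : Fin (2 * l) → ℝ :=
  fun t => if (t : ℕ) = k then 1 else 0

/-- Interior multiplication by `v ∈ V`. -/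
def contrR (l : ℕ) (v : Fin (2 * l) → ℝ) : FormsR l →ₗ[ℝ] FormsR l :=
  CliffordAlgebra.contractLeft
    (∑ k : Fin (2 * l), v k • (LinearMap.proj k : (Fin (2 * l) → ℝ) →ₗ[ℝ] ℝ))

/-- The symplectic form `ω = ε^1∧ε^{l+1} + … + ε^l∧ε^{2l}` as a 2-form
(0-based: `Σ_{k<l} ε^k ∧ ε^{k+l}`). -/
def omegaTwoForm (l : ℕ) : FormsR l :=
  ∑ k : Fin l, epsN l k * epsN l ((k : ℕ) + l)

namespace VijAux

variable {l : ℕ}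

/-- the dual functional used in `contrR l (eN l t)` -/
def dN (l t : ℕ) : Module.Dual ℝ (Fin (2 * l) → ℝ) :=
  ∑ k : Fin (2 * l), eN l t k • (LinearMap.proj k : (Fin (2 * l) → ℝ) →ₗ[ℝ] ℝ)

lemma contrR_eq (t : ℕ) : contrR l (eN l t) = CliffordAlgebra.contractLeft (dN l t) := rfl

lemma dN_apply (t u : ℕ) (ht : t < 2 * l) :
    dN l t (fun s => if (s : ℕ) = u then 1 else 0) = if t = u then 1 else 0 := by
  rw [dN, LinearMap.sum_apply, Finset.sum_eq_single (⟨t, ht⟩ : Fin (2 * l))]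
  · simp [eN, eq_comm]
  · intro b _ hb
    simp only [LinearMap.smul_apply, LinearMap.proj_apply, eN, smul_eq_mul]
    have : (b : ℕ) ≠ t := fun h => hb (Fin.ext h)
    simp [this]
  · simp

lemma contr_eps_mul (t u : ℕ) (ht : t < 2 * l) (x : FormsR l) :
    contrR l (eN l t) (epsN l u * x)
      = (if t = u then (1:ℝ) else 0) • x - epsN l u * contrR l (eN l t) x := by
  rw [contrR_eq, epsN, CliffordAlgebra.contractLeft_ι_mul, dN_apply t u ht]

lemma contr_eps (t u : ℕ) (ht : t < 2 * l) :
    contrR l (eN l t) (epsN l u)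
      = algebraMap ℝ (FormsR l) (if t = u then 1 else 0) := by
  rw [contrR_eq, epsN, CliffordAlgebra.contractLeft_ι, dN_apply t u ht]

lemma contr_one (t : ℕ) : contrR l (eN l t) (1 : FormsR l) = 0 :=
  CliffordAlgebra.contractLeft_one _ _

/-- product of eps over a list of indices -/
def pE (l : ℕ) (L : List ℕ) : FormsR l := (L.map (epsN l)).prod

@[simp] lemma pE_nil : pE l [] = 1 := rfl

lemma pE_cons (a : ℕ) (L : List ℕ) : pE l (a :: L) = epsN l a * pE l L := by
  simp [pE]

lemma contr_pE_not_mem (t : ℕ) (ht : t < 2 * l) :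
    ∀ (L : List ℕ), t ∉ L → contrR l (eN l t) (pE l L) = 0 := by
  intro L
  induction L with
  | nil => intro _; simpa using contr_one t
  | cons a L ih =>
      intro h
      rw [pE_cons, contr_eps_mul t a ht, ih (fun hm => h (List.mem_cons_of_mem a hm)),
        if_neg (fun he => h (by rw [he]; exact List.mem_cons_self)), zero_smul, mul_zero, sub_zero]

lemma contr_pE_mem (t : ℕ) (ht : t < 2 * l) :
    ∀ (L : List ℕ), L.Nodup → t ∈ L →
      ∃ c : ℝ, c ≠ 0 ∧ contrR l (eN l t) (pE l L) = c • pE l (L.erase t) := by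
  intro L
  induction L with
  | nil => intro _ h; simp at h
  | cons a L ih =>
      intro hnd hm
      rcases eq_or_ne t a with rfl | hta
      · refine ⟨1, one_ne_zero, ?_⟩
        rw [pE_cons, contr_eps_mul t t ht, if_pos rfl,
          contr_pE_not_mem t ht L (List.Nodup.notMem hnd), mul_zero, sub_zero,
          List.erase_cons_head, one_smul]
      · obtain ⟨c, hc, hC⟩ := ih hnd.of_cons ((List.mem_cons.mp hm).resolve_left hta)
        refine ⟨-c, neg_ne_zero.mpr hc, ?_⟩
        rw [pE_cons, contr_eps_mul t a ht, if_neg hta, zero_smul, zero_sub, hC,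
          List.erase_cons_tail, pE_cons]
        · rw [mul_smul_comm, ← neg_smul]
        · simpa using (Ne.symm hta)

end VijAux

namespace VijAux

variable {l : ℕ}

lemma eps_anticomm (a b : ℕ) : epsN l a * epsN l b = -(epsN l b * epsN l a) := by
  have := ι_add_mul_swap (R := ℝ) (fun t : Fin (2*l) => if (t : ℕ) = a then (1:ℝ) else 0)
    (fun t : Fin (2*l) => if (t : ℕ) = b then (1:ℝ) else 0)
  rw [epsN, epsN]
  exact eq_neg_of_add_eq_zero_left this

lemma omega_mul_eps (s : ℕ) :
    omegaTwoForm l * epsN l s = epsN l s * omegaTwoForm l := by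
  rw [omegaTwoForm, Finset.sum_mul, Finset.mul_sum]
  refine Finset.sum_congr rfl fun k _ => ?_
  rw [mul_assoc, eps_anticomm ((k:ℕ)+l) s, mul_neg, ← mul_assoc, eps_anticomm (k:ℕ) s,
    neg_mul, neg_neg, mul_assoc]

lemma omega_pow_mul_eps (n : ℕ) (s : ℕ) :
    omegaTwoForm l ^ n * epsN l s = epsN l s * omegaTwoForm l ^ n := by
  induction n with
  | zero => simp
  | succ n ih => rw [pow_succ, mul_assoc, omega_mul_eps, ← mul_assoc, ih, mul_assoc]

lemma contr_omega (t : ℕ) (ht : t < l) :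
    contrR l (eN l t) (omegaTwoForm l) = epsN l (t + l) := by
  have ht2 : t < 2 * l := by omega
  rw [omegaTwoForm, map_sum]
  rw [Finset.sum_eq_single (⟨t, ht⟩ : Fin l)]
  · rw [contr_eps_mul t _ ht2, contr_eps t _ ht2, if_pos rfl, if_neg (by omega), map_zero,
      mul_zero, sub_zero, one_smul]
  · intro b _ hb
    have hbt : t ≠ (b : ℕ) := fun h => hb (Fin.ext h.symm)
    rw [contr_eps_mul t _ ht2, contr_eps t _ ht2, if_neg hbt, if_neg (by omega), map_zero,
      mul_zero, sub_zero, zero_smul]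
  · simp

lemma contr_omega_mul (t : ℕ) (ht : t < l) (x : FormsR l) :
    contrR l (eN l t) (omegaTwoForm l * x)
      = epsN l (t + l) * x + omegaTwoForm l * contrR l (eN l t) x := by
  have ht2 : t < 2 * l := by omega
  nth_rewrite 2 [omegaTwoForm]
  rw [← contr_omega t ht, omegaTwoForm, Finset.sum_mul, map_sum, map_sum, Finset.sum_mul,
    Finset.sum_mul, ← Finset.sum_add_distrib]
  refine Finset.sum_congr rfl fun k _ => ?_
  rw [mul_assoc, contr_eps_mul t _ ht2, contr_eps_mul t _ ht2, contr_eps_mul t _ ht2,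
    contr_eps t _ ht2]
  rw [mul_sub, sub_mul, mul_assoc (epsN l (k:ℕ)), mul_assoc (epsN l (k:ℕ))]
  simp only [← Algebra.smul_def, mul_smul_comm, smul_mul_assoc]
  abel

lemma contr_omega_pow_mul (t : ℕ) (ht : t < l) (n : ℕ) (x : FormsR l) :
    contrR l (eN l t) (omegaTwoForm l ^ (n + 1) * x)
      = ((n : ℝ) + 1) • (omegaTwoForm l ^ n * (epsN l (t + l) * x))
        + omegaTwoForm l ^ (n + 1) * contrR l (eN l t) x := by
  induction n generalizing x with
  | zero => simp [contr_omega_mul t ht x, omega_pow_mul_eps]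
  | succ n ih =>
      set w := omegaTwoForm l with hw
      set e := epsN l (t + l) with he
      set y := contrR l (eN l t) x with hy
      have h1 : w ^ (n + 1 + 1) * x = w ^ (n + 1) * (w * x) := by
        rw [pow_succ, mul_assoc]
      have h2 : e * (w * x) = w * (e * x) := by
        rw [← mul_assoc, ← omega_mul_eps, mul_assoc]
      have h3 : w ^ n * (w * (e * x)) = w ^ (n + 1) * (e * x) := by
        rw [← mul_assoc, ← pow_succ]
      have h4 : w ^ (n + 1) * (w * y) = w ^ (n + 1 + 1) * y := by
        rw [← mul_assoc, ← pow_succ]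
      rw [h1, ih, contr_omega_mul t ht, h2, h3, mul_add, h4, ← he]
      push_cast
      module

end VijAux

namespace VijAux

variable {l : ℕ}

def foldC (l : ℕ) (M : List ℕ) (x : FormsR l) : FormsR l :=
  M.foldl (fun acc k => contrR l (eN l k) acc) x

@[simp] lemma foldC_nil (x : FormsR l) : foldC l [] x = x := rfl

lemma foldC_cons (k : ℕ) (M : List ℕ) (x : FormsR l) :
    foldC l (k :: M) x = foldC l M (contrR l (eN l k) x) := rfl

lemma foldC_append (M N : List ℕ) (x : FormsR l) :
    foldC l (M ++ N) x = foldC l N (foldC l M x) := List.foldl_append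

lemma foldC_smul (M : List ℕ) (c : ℝ) (x : FormsR l) :
    foldC l M (c • x) = c • foldC l M x := by
  induction M generalizing x with
  | nil => rfl
  | cons k M ih => rw [foldC_cons, map_smul, ih, foldC_cons]

lemma foldC_zero (M : List ℕ) : foldC l M (0 : FormsR l) = 0 := by
  induction M with
  | nil => rfl
  | cons k M ih => rw [foldC_cons, map_zero, ih]

lemma phase1 : ∀ (r t n : ℕ) (Q : List ℕ), t + r ≤ l → r ≤ n → (∀ q ∈ Q, l ≤ q) →
    ∃ c : ℝ, c ≠ 0 ∧ foldC l (List.range' t r) (omegaTwoForm l ^ n * pE l Q)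
      = c • (omegaTwoForm l ^ (n - r) * pE l ((List.range' (t + l) r).reverse ++ Q)) := by
  intro r
  induction r with
  | zero => intro t n Q _ _ _; exact ⟨1, one_ne_zero, by simp⟩
  | succ r ih =>
      intro t n Q htr hrn hQ
      obtain ⟨n', rfl⟩ : ∃ n', n = n' + 1 := ⟨n - 1, by omega⟩
      have ht2 : t < 2 * l := by omega
      have htl : t < l := by omega
      have hnotmem : t ∉ Q := fun h => by have := hQ t h; omega
      rw [List.range'_succ, foldC_cons, contr_omega_pow_mul t htl n' (pE l Q),
        contr_pE_not_mem t ht2 Q hnotmem, mul_zero, add_zero, ← pE_cons, foldC_smul]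
      obtain ⟨c, hc, hfold⟩ := ih (t + 1) n' ((t + l) :: Q) (by omega) (by omega)
        (by intro q hq
            rcases List.mem_cons.mp hq with rfl | h
            · omega
            · exact hQ q h)
      refine ⟨((n' : ℝ) + 1) * c, by positivity, ?_⟩
      rw [hfold, smul_smul, show n' + 1 - (r + 1) = n' - r from by omega,
        show (List.range' (t + l) (r + 1)).reverse ++ Q
            = (List.range' (t + 1 + l) r).reverse ++ ((t + l) :: Q) from by
          rw [List.range'_succ, List.reverse_cons, List.append_assoc,
            List.singleton_append, show t + 1 + l = t + l + 1 from by omega]]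

lemma phase23 : ∀ (M L : List ℕ), L.Perm M → L.Nodup → (∀ k ∈ M, k < 2 * l) →
    ∃ c : ℝ, c ≠ 0 ∧ foldC l M (pE l L) = algebraMap ℝ (FormsR l) c := by
  intro M
  induction M with
  | nil =>
      intro L hp _ _
      rw [hp.eq_nil]
      exact ⟨1, one_ne_zero, by simp⟩
  | cons k M ih =>
      intro L hp hnd hbd
      have hk2 : k < 2 * l := hbd k List.mem_cons_self
      have hkL : k ∈ L := hp.mem_iff.mpr List.mem_cons_self
      obtain ⟨c, hc, hC⟩ := contr_pE_mem k hk2 L hnd hkL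
      have hperm : (L.erase k).Perm M := by
        have := hp.erase k
        rwa [List.erase_cons_head] at this
      obtain ⟨c', hc', hfold⟩ := ih (L.erase k) hperm (hnd.erase k)
        (fun k' hk' => hbd k' (List.mem_cons_of_mem k hk'))
      refine ⟨c * c', mul_ne_zero hc hc', ?_⟩
      rw [foldC_cons, hC, foldC_smul, hfold, Algebra.smul_def, ← map_mul]

end VijAux

/-- The vector `v = ω^{∧m} ∧ ε^{l+1} ∧ … ∧ ε^{l+j}` (0-based:
`ω^m ∧ ε^l ∧ … ∧ ε^{l+j−1}`), where `m = (i−j)/2`. -/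
def vij (l i j : ℕ) : FormsR l :=
  omegaTwoForm l ^ ((i - j) / 2) * ((List.range' l j).map (epsN l)).prod

open VijAux

/-- for `0 ≤ j ≤ l`, `j ≤ i`, `i − j` even and `i + j ≤ 2l`, the
`i`-form `v = ω^{∧((i−j)/2)} ∧ ε^{l+1} ∧ … ∧ ε^{l+j}` is nonzero; more
precisely, its coefficient on the basis monomial
`ε^{j+1}∧…∧ε^{j+(i−j)/2} ∧ ε^{l+1}∧…∧ε^{l+j} ∧ ε^{l+j+1}∧…∧ε^{l+j+(i−j)/2}`
is nonzero: the full contraction of `v` against the corresponding dual basis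
vectors is a nonzero scalar. -/
theorem vij_nonzero (l i j : ℕ) (hj : j ≤ l) (hji : j ≤ i)
    (heven : 2 ∣ (i - j)) (hsum : i + j ≤ 2 * l) :
    vij l i j ≠ 0 ∧
    (List.range' j ((i - j) / 2) ++ List.range' l j ++
        List.range' (l + j) ((i - j) / 2)).foldl
      (fun acc k => contrR l (eN l k) acc) (vij l i j) ≠ 0 := by
  set m := (i - j) / 2 with hm
  have h2m : i - j = 2 * m := by omega
  have hjm : j + m ≤ l := by omega
  have hv : vij l i j = omegaTwoForm l ^ m * pE l (List.range' l j) := rfl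
  have key : ∃ c : ℝ, c ≠ 0 ∧
      foldC l (List.range' j m ++ List.range' l j ++ List.range' (l + j) m)
        (vij l i j) = algebraMap ℝ (FormsR l) c := by
    obtain ⟨c1, hc1, h1⟩ := phase1 (l := l) m j m (List.range' l j) (by omega) le_rfl
      (fun q hq => (List.mem_range'_1.mp hq).1)
    rw [Nat.sub_self, pow_zero, one_mul] at h1
    have hperm : ((List.range' (j + l) m).reverse ++ List.range' l j).Perm
        (List.range' l j ++ List.range' (l + j) m) := by
      refine ((List.reverse_perm _).append_right _).trans ?_
      rw [show j + l = l + j from by omega]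
      exact List.perm_append_comm
    have hnd : ((List.range' (j + l) m).reverse ++ List.range' l j).Nodup := by
      refine List.Nodup.append (List.nodup_reverse.mpr List.nodup_range')
        List.nodup_range' ?_
      intro a ha hb
      have h1 := (List.mem_range'_1.mp (List.mem_reverse.mp ha)).1
      have h2 := (List.mem_range'_1.mp hb).2
      omega
    have hbd : ∀ k ∈ List.range' l j ++ List.range' (l + j) m, k < 2 * l := by
      intro k hk
      rcases List.mem_append.mp hk with h | h
      · have := (List.mem_range'_1.mp h).2; omega
      · have := (List.mem_range'_1.mp h).2; omega
    obtain ⟨c2, hc2, h2⟩ := phase23 (l := l) (List.range' l j ++ List.range' (l + j) m)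
      ((List.range' (j + l) m).reverse ++ List.range' l j) hperm hnd hbd
    refine ⟨c1 * c2, mul_ne_zero hc1 hc2, ?_⟩
    rw [List.append_assoc, foldC_append, hv, h1, foldC_smul, h2, Algebra.smul_def, ← map_mul]
  obtain ⟨c, hc, hfold⟩ := key
  have h2 : foldC l (List.range' j m ++ List.range' l j ++ List.range' (l + j) m)
      (vij l i j) ≠ 0 := by
    rw [hfold]
    exact fun h => hc ((ExteriorAlgebra.algebraMap_eq_zero_iff _ c).mp h)
  refine ⟨fun h => h2 ?_, h2⟩
  rw [h]
  exact foldC_zero _
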